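/- arXiv:2405.09823 — 4 statements merged into one kernel-verified Lean document; each statement's English description precedes it below -/
import Mathlib

section
/- Let R > 1, let k ≤ −1 be an integer, and let x ∈ [3^k, 3^{k+1}). Define 𝒴₁(k) = 1/(−k) and recursively 𝒴_m(k) = 1/(1 − ln(𝒴_{m−1}(k))) for m ≥ 2. Then ℒ₁(x/R) < 𝒴₁(k), and for every integer m ≥ 2, ℒ_m(x/R) < 𝒴_m(k). -/
open Real

/-- `Lrec m t` is the iterated logarithmic function `ℒ_m(t)`, with `ℒ₀(t) = t`,
`ℒ₁(t) = 1/(1 - log t)` and `ℒ_m = ℒ₁ ∘ ℒ_{m-1}`. -/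
noncomputable def Lrec : ℕ → ℝ → ℝ
  | 0, t => t
  | m + 1, t => 1 / (1 - Real.log (Lrec m t))

/-- `Yrec m x` is the comparison quantity `𝒴_m(x)`: `𝒴₁(x) = 1/(-x)` and
`𝒴_m(x) = 1/(1 - log 𝒴_{m-1}(x))` for `m ≥ 2`. -/
noncomputable def Yrec : ℕ → ℝ → ℝ
  | 0, x => x
  | 1, x => 1 / (-x)
  | m + 2, x => 1 / (1 - Real.log (Yrec (m + 1) x))

lemma one_lt_log_three : (1 : ℝ) < Real.log 3 := by
  rw [Real.lt_log_iff_exp_lt (by norm_num)]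
  calc Real.exp 1 < 2.7182818286 := Real.exp_one_lt_d9
    _ < 3 := by norm_num

theorem Lrec_lt_Yrec (R : ℝ) (hR : 1 < R) (k : ℤ) (hk : k ≤ -1) (x : ℝ)
    (hx : x ∈ Set.Ico ((3 : ℝ) ^ k) ((3 : ℝ) ^ (k + 1))) :
    Lrec 1 (x / R) < Yrec 1 (k : ℝ) ∧
      ∀ m : ℕ, 2 ≤ m → Lrec m (x / R) < Yrec m (k : ℝ) := by
  obtain ⟨hx1, hx2⟩ := hx
  have h3k : (0 : ℝ) < (3 : ℝ) ^ k := zpow_pos (by norm_num) k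
  have hxpos : 0 < x := lt_of_lt_of_le h3k hx1
  have hRpos : (0 : ℝ) < R := lt_trans one_pos hR
  have hkneg : (k : ℝ) + 1 ≤ 0 := by
    have : (k : ℝ) ≤ -1 := by exact_mod_cast hk
    linarith
  have hnk : (1 : ℝ) ≤ -(k : ℝ) := by linarith
  -- log (x/R) < k + 1
  have hlog : Real.log (x / R) < (k : ℝ) + 1 := by
    have h1 : Real.log x < ((k : ℝ) + 1) * Real.log 3 := by
      have := Real.log_lt_log hxpos hx2
      rw [Real.log_zpow] at this; push_cast at this; exact this
    have h2 : ((k : ℝ) + 1) * Real.log 3 ≤ (k : ℝ) + 1 := by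
      nlinarith [one_lt_log_three]
    have hR' : 0 < Real.log R := Real.log_pos hR
    rw [Real.log_div (ne_of_gt hxpos) (ne_of_gt hRpos)]
    linarith
  have hden : -(k : ℝ) < 1 - Real.log (x / R) := by linarith
  have base : Lrec 1 (x / R) < Yrec 1 (k : ℝ) := by
    show 1 / (1 - Real.log (x / R)) < 1 / (-(k : ℝ))
    exact one_div_lt_one_div_of_lt (by linarith) hden
  have aux : ∀ n : ℕ, 0 < Lrec (n + 1) (x / R) ∧
      Lrec (n + 1) (x / R) < Yrec (n + 1) (k : ℝ) ∧ Yrec (n + 1) (k : ℝ) ≤ 1 := by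
    intro n
    induction n with
    | zero =>
      refine ⟨?_, base, ?_⟩
      · show 0 < 1 / (1 - Real.log (x / R))
        exact div_pos one_pos (by linarith)
      · show 1 / (-(k : ℝ)) ≤ 1
        rw [div_le_one (by linarith)]; exact hnk
    | succ n ih =>
      obtain ⟨hLpos, hLY, hY1⟩ := ih
      have hYpos : 0 < Yrec (n + 1) (k : ℝ) := lt_trans hLpos hLY
      have hlogY : Real.log (Yrec (n + 1) (k : ℝ)) ≤ 0 := Real.log_nonpos hYpos.le hY1
      have hloglt : Real.log (Lrec (n + 1) (x / R)) < Real.log (Yrec (n + 1) (k : ℝ)) :=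
        Real.log_lt_log hLpos hLY
      refine ⟨?_, ?_, ?_⟩
      · show 0 < 1 / (1 - Real.log (Lrec (n + 1) (x / R)))
        exact div_pos one_pos (by linarith)
      · show 1 / (1 - Real.log (Lrec (n + 1) (x / R))) <
            1 / (1 - Real.log (Yrec (n + 1) (k : ℝ)))
        exact one_div_lt_one_div_of_lt (by linarith) (by linarith)
      · show 1 / (1 - Real.log (Yrec (n + 1) (k : ℝ))) ≤ 1
        rw [div_le_one (by linarith)]; linarith
  refine ⟨base, ?_⟩
  intro m hm
  match m, hm with
  | (n + 2), _ => exact (aux (n + 1)).2.1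
end

section
/- Define, for real x < 0, 𝒴₁(x) = 1/(−x) and recursively 𝒴_m(x) = 1/(1 − ln(𝒴_{m−1}(x))) for m ≥ 2. Then for every integer k ≤ −1 and every integer m ≥ 2: 𝒴_m(k) − 𝒴_m(k−1) ≥ (𝒴₁(k)·𝒴₂(k)⋯𝒴_{m−1}(k)·𝒴_m(k)²) / 2^{m+1}. -/
open Real

lemma Yrec_pos_le_one {x : ℝ} (hx : x ≤ -1) :
    ∀ m : ℕ, 0 < Yrec (m+1) x ∧ Yrec (m+1) x ≤ 1 := by
  intro m
  induction m with
  | zero =>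
    have hx0 : (0:ℝ) < -x := by linarith
    refine ⟨div_pos one_pos hx0, ?_⟩
    show 1 / (-x) ≤ 1
    rw [div_le_one hx0]; linarith
  | succ n ih =>
    obtain ⟨h1, h2⟩ := ih
    have hlog : Real.log (Yrec (n+1) x) ≤ 0 := Real.log_nonpos h1.le h2
    have hd : (0:ℝ) < 1 - Real.log (Yrec (n+1) x) := by linarith
    refine ⟨div_pos one_pos hd, ?_⟩
    show 1 / (1 - Real.log (Yrec (n+1) x)) ≤ 1
    rw [div_le_one hd]; linarith

lemma Yrec_mono_half {x : ℝ} (hx : x ≤ -1) :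
    ∀ m : ℕ, Yrec (m+1) (x-1) ≤ Yrec (m+1) x ∧ Yrec (m+1) x ≤ 2 * Yrec (m+1) (x-1) := by
  have hx' : x - 1 ≤ -1 := by linarith
  intro m
  induction m with
  | zero =>
    have hx0 : (0:ℝ) < -x := by linarith
    have hx1 : (0:ℝ) < -(x-1) := by linarith
    constructor
    · show 1 / (-(x-1)) ≤ 1 / (-x)
      rw [div_le_div_iff₀ hx1 hx0]; linarith
    · show 1 / (-x) ≤ 2 * (1 / (-(x-1)))
      rw [show (2:ℝ) * (1 / (-(x-1))) = 2 / (-(x-1)) by ring, div_le_div_iff₀ hx0 hx1]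
      linarith
  | succ n ih =>
    obtain ⟨hBA, hA2B⟩ := ih
    obtain ⟨hA, hA1⟩ := Yrec_pos_le_one hx n
    obtain ⟨hB, hB1⟩ := Yrec_pos_le_one hx' n
    set A := Yrec (n+1) x with hAdef
    set B := Yrec (n+1) (x-1) with hBdef
    have hlogA : Real.log A ≤ 0 := Real.log_nonpos hA.le hA1
    have hlogB : Real.log B ≤ 0 := Real.log_nonpos hB.le hB1
    have hdA : (0:ℝ) < 1 - Real.log A := by linarith
    have hdB : (0:ℝ) < 1 - Real.log B := by linarith
    have hlogBA : Real.log B ≤ Real.log A := Real.log_le_log hB hBA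
    have hlog2 : Real.log 2 ≤ 1 := by
      have := Real.log_two_lt_d9; linarith
    have hlogA2B : Real.log A ≤ Real.log 2 + Real.log B := by
      have h := Real.log_le_log hA hA2B
      rwa [Real.log_mul (by norm_num) hB.ne'] at h
    constructor
    · show 1 / (1 - Real.log B) ≤ 1 / (1 - Real.log A)
      rw [div_le_div_iff₀ hdB hdA]; linarith
    · show 1 / (1 - Real.log A) ≤ 2 * (1 / (1 - Real.log B))
      rw [show (2:ℝ) * (1 / (1 - Real.log B)) = 2 / (1 - Real.log B) by ring,
        div_le_div_iff₀ hdA hdB]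
      linarith

lemma Yrec_main {x : ℝ} (hx : x ≤ -1) :
    ∀ m : ℕ, Yrec (m+1) x - Yrec (m+1) (x-1) ≥
      (∏ i ∈ Finset.Icc 1 m, Yrec i x) * Yrec (m+1) x ^ 2 / 2 ^ (m+2) := by
  have hx' : x - 1 ≤ -1 := by linarith
  intro m
  induction m with
  | zero =>
    have hx0 : (0:ℝ) < -x := by linarith
    have hx1 : (0:ℝ) < -(x-1) := by linarith
    simp only [Finset.Icc_eq_empty_of_lt (by norm_num : (0:ℕ) < 1), Finset.prod_empty, one_mul]
    show 1 / (-x) - 1 / (-(x-1)) ≥ (1 / (-x)) ^ 2 / 2 ^ 2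
    have hne0 : -x ≠ 0 := hx0.ne'
    have hne1 : -(x-1) ≠ 0 := hx1.ne'
    have key : 1 / (-x) - 1 / (-(x-1)) = 1 / ((-x) * (-(x-1))) := by
      rw [div_sub_div _ _ hne0 hne1]; ring_nf
    have key2 : (1 / (-x)) ^ 2 / 2 ^ 2 = 1 / (4 * x^2) := by
      field_simp; ring
    rw [key, key2]
    have hle : (-x) * (-(x-1)) ≤ 4 * x^2 := by nlinarith
    exact one_div_le_one_div_of_le (by positivity) hle
  | succ n ih =>
    obtain ⟨hA, hA1⟩ := Yrec_pos_le_one hx n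
    obtain ⟨hB, hB1⟩ := Yrec_pos_le_one hx' n
    obtain ⟨hBA, hA2B⟩ := Yrec_mono_half hx n
    obtain ⟨hP, hP1⟩ := Yrec_pos_le_one hx (n+1)
    obtain ⟨hQ, hQ1⟩ := Yrec_pos_le_one hx' (n+1)
    obtain ⟨hQP, hP2Q⟩ := Yrec_mono_half hx (n+1)
    set A := Yrec (n+1) x with hAdef
    set B := Yrec (n+1) (x-1) with hBdef
    set C := ∏ i ∈ Finset.Icc 1 n, Yrec i x with hCdef
    have hC : 0 < C := by
      apply Finset.prod_pos
      intro i hi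
      rw [Finset.mem_Icc] at hi
      obtain ⟨j, rfl⟩ : ∃ j, i = j + 1 := ⟨i - 1, by omega⟩
      exact (Yrec_pos_le_one hx j).1
    have hlogA : Real.log A ≤ 0 := Real.log_nonpos hA.le hA1
    have hlogB : Real.log B ≤ 0 := Real.log_nonpos hB.le hB1
    have hdA : (0:ℝ) < 1 - Real.log A := by linarith
    have hdB : (0:ℝ) < 1 - Real.log B := by linarith
    have hPdef : Yrec (n+2) x = 1 / (1 - Real.log A) := rfl
    have hQdef : Yrec (n+2) (x-1) = 1 / (1 - Real.log B) := rfl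
    set P := Yrec (n+2) x
    set Q := Yrec (n+2) (x-1)
    -- identity
    have hident : P - Q = (Real.log A - Real.log B) * P * Q := by
      rw [hPdef, hQdef]; field_simp; ring
    -- log lower bound
    have hlog_lb : (A - B) / A ≤ Real.log A - Real.log B := by
      have h := Real.log_le_sub_one_of_pos (show (0:ℝ) < B / A by positivity)
      rw [Real.log_div hB.ne' hA.ne'] at h
      have : (A - B) / A = 1 - B / A := by field_simp
      rw [this]; linarith
    -- from ih
    have hABdiv : C * A / 2 ^ (n+2) ≤ (A - B) / A := by
      rw [div_le_div_iff₀ (by positivity) hA]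
      have h := (div_le_iff₀ (by positivity : (0:ℝ) < 2 ^ (n+2))).mp ih
      nlinarith [h]
    have hs1 : C * A / 2 ^ (n+2) ≤ Real.log A - Real.log B := le_trans hABdiv hlog_lb
    have hQge : P / 2 ≤ Q := by linarith
    have step : C * A / 2 ^ (n+2) * (P * (P / 2)) ≤ (Real.log A - Real.log B) * P * Q := by
      calc C * A / 2 ^ (n+2) * (P * (P / 2))
          ≤ C * A / 2 ^ (n+2) * (P * Q) := by
            apply mul_le_mul_of_nonneg_left _ (by positivity)
            exact mul_le_mul_of_nonneg_left hQge hP.le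
        _ ≤ (Real.log A - Real.log B) * (P * Q) := by
            apply mul_le_mul_of_nonneg_right hs1 (by positivity)
        _ = (Real.log A - Real.log B) * P * Q := by ring
    have hprod : ∏ i ∈ Finset.Icc 1 (n+1), Yrec i x = C * A := by
      rw [hCdef, hAdef, Finset.prod_Icc_succ_top (by omega : 1 ≤ n + 1)]
    rw [ge_iff_le, hident, hprod]
    calc C * A * P ^ 2 / 2 ^ (n+1+2)
        = C * A / 2 ^ (n+2) * (P * (P / 2)) := by rw [pow_succ]; ring
      _ ≤ (Real.log A - Real.log B) * P * Q := step

theorem Yrec_diff_lower_bound (k : ℤ) (hk : k ≤ -1) (m : ℕ) (hm : 2 ≤ m) :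
    Yrec m (k : ℝ) - Yrec m ((k : ℝ) - 1) ≥
      (∏ i ∈ Finset.Icc 1 (m - 1), Yrec i (k : ℝ)) * Yrec m (k : ℝ) ^ 2 / 2 ^ (m + 1) := by
  have hk' : (k : ℝ) ≤ -1 := by exact_mod_cast hk
  obtain ⟨n, rfl⟩ : ∃ n, m = n + 1 := ⟨m - 1, by omega⟩
  have h := Yrec_main hk' n
  simpa using h
end

section
/- There exists a constant C > 0 such that for every D > 0, every R > D, every integer m ≥ 2 and every u ∈ C¹((0,2D)) ∩ L¹((0,2D)) with ∫_0^{2D} |u′(x)| dx < ∞: ∫_0^{2D} (|u(x) − (u)_{(0,2D)}| / δ(x)) · ℒ₁(δ(x)/R) ⋯ ℒ_{m−1}(δ(x)/R) · ℒ_m(δ(x)/R)² dx ≤ C·2^m·∫_0^{2D} |u′(x)| dx, where δ(x) = min{x, 2D−x} and (u)_{(0,2D)} = (1/(2D))∫_0^{2D} u(y) dy. -/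
open MeasureTheory Real

lemma Lrec_mem (k : ℕ) {t : ℝ} (h0 : 0 < t) (h1 : t < 1) :
    0 < Lrec k t ∧ Lrec k t < 1 := by
  induction k with
  | zero => exact ⟨h0, h1⟩
  | succ n ih =>
    have hlog : Real.log (Lrec n t) < 0 := Real.log_neg ih.1 ih.2
    have hden : 1 < 1 - Real.log (Lrec n t) := by linarith
    constructor
    · show 0 < 1 / (1 - Real.log (Lrec n t))
      positivity
    · show 1 / (1 - Real.log (Lrec n t)) < 1
      rw [div_lt_one (by linarith)]; linarith

lemma Lrec_succ (k : ℕ) : Lrec (k+1) = fun t => 1 / (1 - Real.log (Lrec k t)) := rfl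

lemma Lrec_succ_apply (k : ℕ) (t : ℝ) : Lrec (k+1) t = 1 / (1 - Real.log (Lrec k t)) := rfl

lemma Lrec_hasDerivAt (k : ℕ) {t : ℝ} (h0 : 0 < t) (h1 : t < 1) :
    HasDerivAt (Lrec (k+1))
      (t⁻¹ * (∏ i ∈ Finset.Icc 1 k, Lrec i t) * (Lrec (k+1) t)^2) t := by
  induction k with
  | zero =>
    have hlt : Real.log t < 0 := Real.log_neg h0 h1
    have h1' : HasDerivAt (fun s : ℝ => 1 - Real.log s) (-t⁻¹) t := by
      simpa using ((Real.hasDerivAt_log h0.ne').const_sub 1)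
    have h2' : HasDerivAt (fun s : ℝ => (1 - Real.log s)⁻¹)
        (-(-t⁻¹) / (1 - Real.log t)^2) t := h1'.inv (by linarith)
    have hfun : Lrec 1 = fun s : ℝ => (1 - Real.log s)⁻¹ := by
      funext s; simp [Lrec]
    rw [hfun]
    convert h2' using 1
    simp [Lrec, div_eq_mul_inv]
  | succ n ih =>
    have hmem := Lrec_mem (n+1) h0 h1
    have hlt : Real.log (Lrec (n+1) t) < 0 := Real.log_neg hmem.1 hmem.2
    have hden : (0:ℝ) < 1 - Real.log (Lrec (n+1) t) := by linarith
    have h1' : HasDerivAt (fun s : ℝ => 1 - Real.log (Lrec (n+1) s))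
        (-((t⁻¹ * (∏ i ∈ Finset.Icc 1 n, Lrec i t) * (Lrec (n+1) t)^2) / Lrec (n+1) t)) t :=
      ((ih.log hmem.1.ne').const_sub 1)
    have h2' := h1'.inv hden.ne'
    have hfun : Lrec (n+2) = fun s : ℝ => (1 - Real.log (Lrec (n+1) s))⁻¹ := by
      funext s; rw [Lrec_succ_apply, one_div]
    rw [hfun]
    refine h2'.congr_deriv ?_
    have hprod : (∏ i ∈ Finset.Icc 1 (n+1), Lrec i t)
        = (∏ i ∈ Finset.Icc 1 n, Lrec i t) * Lrec (n+1) t :=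
      Finset.prod_Icc_succ_top (Nat.one_le_iff_ne_zero.mpr (Nat.succ_ne_zero n)) _
    rw [hprod]
    simp only []
    have hl : Lrec (n+1) t ≠ 0 := hmem.1.ne'
    field_simp

lemma tendsto_Lrec_zero' (k : ℕ) :
    Filter.Tendsto (Lrec k) (nhdsWithin 0 (Set.Ioi 0)) (nhdsWithin 0 (Set.Ioi 0)) := by
  induction k with
  | zero =>
    have : Lrec 0 = id := rfl
    rw [this]; exact Filter.tendsto_id
  | succ n ih =>
    have hlog : Filter.Tendsto (fun t => Real.log (Lrec n t))
        (nhdsWithin 0 (Set.Ioi 0)) Filter.atBot :=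
      Real.tendsto_log_nhdsGT_zero.comp ih
    have h1 : Filter.Tendsto (fun t => 1 - Real.log (Lrec n t))
        (nhdsWithin 0 (Set.Ioi 0)) Filter.atTop :=
      by
      have := Filter.tendsto_neg_atTop_iff.mpr hlog
      exact Filter.tendsto_atTop_add_const_left _ 1 this
    have h2 : Filter.Tendsto (Lrec (n+1)) (nhdsWithin 0 (Set.Ioi 0)) (nhds 0) := by
      have := h1.inv_tendsto_atTop
      rw [Lrec_succ]
      exact this.congr fun t => by simp [one_div]
    rw [tendsto_nhdsWithin_iff]
    refine ⟨h2, ?_⟩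
    have hmem : ∀ t ∈ Set.Ioo (0:ℝ) 1, Lrec (n+1) t ∈ Set.Ioi (0:ℝ) :=
      fun t ht => (Lrec_mem (n+1) ht.1 ht.2).1
    filter_upwards [Ioo_mem_nhdsGT_of_mem (by simp : (0:ℝ) ∈ Set.Ico (0:ℝ) 1)] with t ht
    exact hmem t ht

lemma Lrec_pos (k : ℕ) {t : ℝ} (h0 : 0 < t) (h1 : t < 1) : 0 < Lrec k t :=
  (Lrec_mem k h0 h1).1

lemma W_hasDerivAt (R : ℝ) (hR : 0 < R) (k : ℕ) {x : ℝ} (h0 : 0 < x) (h1 : x < R) :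
    HasDerivAt (fun y => Lrec (k+1) (y / R))
      (x⁻¹ * (∏ i ∈ Finset.Icc 1 k, Lrec i (x / R)) * (Lrec (k+1) (x / R))^2) x := by
  have ht0 : 0 < x / R := div_pos h0 hR
  have ht1 : x / R < 1 := (div_lt_one hR).mpr h1
  have hinner : HasDerivAt (fun y : ℝ => y / R) (1 / R) x := by
    simpa using (hasDerivAt_id x).div_const R
  have := (Lrec_hasDerivAt k ht0 ht1).comp x hinner
  refine this.congr_deriv ?_
  have hx : x ≠ 0 := h0.ne'
  have hR' : R ≠ 0 := hR.ne'
  field_simp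

lemma W_nonneg (R : ℝ) (hR : 0 < R) (k : ℕ) {x : ℝ} (h0 : 0 < x) (h1 : x < R) :
    0 ≤ x⁻¹ * (∏ i ∈ Finset.Icc 1 k, Lrec i (x / R)) * (Lrec (k+1) (x / R))^2 := by
  have ht0 : 0 < x / R := div_pos h0 hR
  have ht1 : x / R < 1 := (div_lt_one hR).mpr h1
  have hp : 0 < ∏ i ∈ Finset.Icc 1 k, Lrec i (x / R) :=
    Finset.prod_pos fun i _ => Lrec_pos i ht0 ht1
  positivity

lemma half_integral (D R : ℝ) (hD : 0 < D) (hR : D < R) (k : ℕ) :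
    IntegrableOn (fun x => x⁻¹ * (∏ i ∈ Finset.Icc 1 k, Lrec i (x/R)) * (Lrec (k+1) (x/R))^2)
      (Set.Ioc 0 D) volume ∧
    ∫ x in Set.Ioc 0 D,
      x⁻¹ * (∏ i ∈ Finset.Icc 1 k, Lrec i (x/R)) * (Lrec (k+1) (x/R))^2 ≤ 1 := by
  have hR0 : 0 < R := hD.trans hR
  set W : ℝ → ℝ :=
    fun x => x⁻¹ * (∏ i ∈ Finset.Icc 1 k, Lrec i (x/R)) * (Lrec (k+1) (x/R))^2 with hW
  set g : ℝ → ℝ := fun x => if x ≤ 0 then 0 else Lrec (k+1) (x/R) with hg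
  have hgder : ∀ x ∈ Set.Ioo (0:ℝ) D, HasDerivAt g (W x) x := by
    intro x hx
    have hd := W_hasDerivAt R hR0 k hx.1 (hx.2.trans hR)
    apply hd.congr_of_eventuallyEq
    filter_upwards [Ioi_mem_nhds hx.1] with y hy
    simp [hg, not_le.mpr (Set.mem_Ioi.mp hy)]
  have hWpos : ∀ x ∈ Set.Ioo (0:ℝ) D, 0 ≤ W x :=
    fun x hx => W_nonneg R hR0 k hx.1 (hx.2.trans hR)
  have hcont : ContinuousOn g (Set.Icc 0 D) := by
    intro x hx
    rcases eq_or_lt_of_le hx.1 with h | h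
    · subst h
      have hIoi : Filter.Tendsto g (nhdsWithin 0 (Set.Ioi 0)) (nhds (g 0)) := by
        have hdivR : Filter.Tendsto (fun x : ℝ => x / R)
            (nhdsWithin 0 (Set.Ioi 0)) (nhdsWithin 0 (Set.Ioi 0)) := by
          rw [tendsto_nhdsWithin_iff]
          constructor
          · have : Filter.Tendsto (fun x : ℝ => x / R) (nhds 0) (nhds (0 / R)) :=
              (continuous_id.div_const R).tendsto 0
            simpa using this.mono_left nhdsWithin_le_nhds
          · filter_upwards [self_mem_nhdsWithin] with y hy
            exact div_pos (Set.mem_Ioi.mp hy) hR0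
        have := (tendsto_Lrec_zero' (k+1)).comp hdivR
        have h2 : Filter.Tendsto (fun x : ℝ => Lrec (k+1) (x / R))
            (nhdsWithin 0 (Set.Ioi 0)) (nhds 0) := this.mono_right nhdsWithin_le_nhds
        have hgeq : ∀ᶠ y in nhdsWithin (0:ℝ) (Set.Ioi 0), g y = Lrec (k+1) (y / R) := by
          filter_upwards [self_mem_nhdsWithin] with y hy
          simp [hg, not_le.mpr (Set.mem_Ioi.mp hy)]
        have hg0 : g 0 = 0 := by simp [hg]
        rw [hg0]
        exact h2.congr' (hgeq.mono fun y hy => hy.symm)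
      have : ContinuousWithinAt g (Set.Ici 0) 0 := by
        rw [← continuousWithinAt_Ioi_iff_Ici]
        exact hIoi
      exact this.mono (Set.Icc_subset_Ici_self)
    · have hd := W_hasDerivAt R hR0 k h (lt_of_le_of_lt hx.2 hR)
      have : HasDerivAt g (W x) x := by
        apply hd.congr_of_eventuallyEq
        filter_upwards [Ioi_mem_nhds h] with y hy
        simp [hg, not_le.mpr (Set.mem_Ioi.mp hy)]
      exact this.continuousAt.continuousWithinAt
  have hint : IntegrableOn W (Set.Ioc 0 D) volume :=
    intervalIntegral.integrableOn_deriv_of_nonneg hcont hgder hWpos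
  refine ⟨hint, ?_⟩
  have hic : IntervalIntegrable W volume 0 D := by
    rw [intervalIntegrable_iff_integrableOn_Ioc_of_le hD.le]
    exact hint
  have heq : ∫ y in (0:ℝ)..D, W y = g D - g 0 :=
    intervalIntegral.integral_eq_sub_of_hasDeriv_right_of_le hD.le hcont
      (fun x hx => (hgder x hx).hasDerivWithinAt) hic
  have : ∫ x in Set.Ioc (0:ℝ) D, W x = g D - g 0 := by
    rw [← heq, intervalIntegral.integral_of_le hD.le]
  rw [this]
  have hgD : g D = Lrec (k+1) (D/R) := by simp [hg, not_le.mpr hD]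
  have hg0 : g 0 = 0 := by simp [hg]
  rw [hgD, hg0, sub_zero]
  exact le_of_lt (Lrec_mem (k+1) (div_pos hD hR0) ((div_lt_one hR0).mpr hR)).2

lemma osc_bound (D : ℝ) (hD : 0 < D) (u : ℝ → ℝ)
    (h1 : ContDiffOn ℝ 1 u (Set.Ioo (0 : ℝ) (2 * D)))
    (h2 : IntegrableOn u (Set.Ioo (0 : ℝ) (2 * D)) volume)
    (h3 : IntegrableOn (fun x => |derivWithin u (Set.Ioo (0 : ℝ) (2 * D)) x|)
      (Set.Ioo (0 : ℝ) (2 * D)) volume)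
    {x : ℝ} (hx : x ∈ Set.Ioo (0 : ℝ) (2 * D)) :
    |u x - ⨍ y in Set.Ioo (0 : ℝ) (2 * D), u y| ≤
      ∫ y in Set.Ioo (0 : ℝ) (2 * D), |derivWithin u (Set.Ioo (0 : ℝ) (2 * D)) y| := by
  set s : Set ℝ := Set.Ioo (0 : ℝ) (2 * D) with hs
  set u' : ℝ → ℝ := derivWithin u s with hu'
  set V : ℝ := ∫ y in s, |u' y| with hV
  have hopen : IsOpen s := isOpen_Ioo
  have hmeas : MeasurableSet s := hopen.measurableSet
  have hder : ∀ z ∈ s, HasDerivAt u (u' z) z := fun z hz =>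
    (((h1.differentiableOn one_ne_zero) z hz).hasDerivWithinAt).hasDerivAt (hopen.mem_nhds hz)
  have hu'cont : ContinuousOn u' s :=
    h1.continuousOn_derivWithin hopen.uniqueDiffOn le_rfl
  have hu'int : IntegrableOn u' s volume := by
    refine MeasureTheory.Integrable.mono' h3 (hu'cont.aestronglyMeasurable hmeas) ?_
    filter_upwards with y
    simp [Real.norm_eq_abs]
  have hVnonneg : 0 ≤ V := by
    apply MeasureTheory.integral_nonneg
    intro y; positivity
  -- oscillation bound
  have hosc : ∀ a ∈ s, ∀ b ∈ s, |u b - u a| ≤ V := by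
    have key : ∀ a ∈ s, ∀ b ∈ s, a ≤ b → |u b - u a| ≤ V := by
      intro a ha b hb hab
      have hsub : Set.uIcc a b ⊆ s := by
        rw [Set.uIcc_of_le hab]
        exact fun z hz => ⟨lt_of_lt_of_le ha.1 hz.1, lt_of_le_of_lt hz.2 hb.2⟩
      have hii : IntervalIntegrable u' volume a b := by
        rw [intervalIntegrable_iff_integrableOn_Ioc_of_le hab]
        exact hu'int.mono_set fun z hz =>
          ⟨lt_of_lt_of_le ha.1 (le_of_lt hz.1), lt_of_le_of_lt hz.2 hb.2⟩
      have hftc : ∫ y in a..b, u' y = u b - u a :=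
        intervalIntegral.integral_eq_sub_of_hasDerivAt
          (fun z hz => hder z (hsub hz)) hii
      rw [← hftc]
      have habs : |∫ y in a..b, u' y| ≤ ∫ y in a..b, |u' y| :=
        intervalIntegral.abs_integral_le_integral_abs hab
      refine habs.trans ?_
      rw [intervalIntegral.integral_of_le hab]
      rw [MeasureTheory.integral_Ioc_eq_integral_Ioo]
      apply MeasureTheory.setIntegral_mono_set h3
      · filter_upwards with y; positivity
      · filter_upwards with y hy
        exact ⟨lt_trans ha.1 hy.1, lt_trans hy.2 hb.2⟩
    intro a ha b hb
    rcases le_total a b with h | h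
    · exact key a ha b hb h
    · rw [abs_sub_comm]; exact key b hb a ha h
  -- measure facts
  have hvol : (volume s).toReal = 2 * D := by
    rw [hs, Real.volume_Ioo, ENNReal.toReal_ofReal (by linarith)]; ring
  have hvolpos : (0:ℝ) < (volume s).toReal := by rw [hvol]; linarith
  have hA : (⨍ y in s, u y) = ((volume s).toReal)⁻¹ • ∫ y in s, u y := by
    rw [MeasureTheory.setAverage_eq, measureReal_def]
  -- the integral of constants
  have hcint : IntegrableOn (fun _ : ℝ => u x) s volume := by
    apply (integrableOn_const_iff (C := u x)).mpr
    right
    rw [hs, Real.volume_Ioo]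
    exact ENNReal.ofReal_lt_top
  have hdiff : u x - (⨍ y in s, u y)
      = ((volume s).toReal)⁻¹ * ∫ y in s, (u x - u y) := by
    rw [MeasureTheory.integral_sub hcint h2, hA]
    rw [MeasureTheory.setIntegral_const, measureReal_def]
    have hvol0 : (volume s).toReal ≠ 0 := hvolpos.ne'
    field_simp
    simp only [smul_eq_mul]
    rw [mul_sub, ← mul_assoc, mul_one_div_cancel hvol0, one_mul]
  rw [hdiff, abs_mul, abs_inv, abs_of_pos hvolpos]
  have h5 : |∫ y in s, (u x - u y)| ≤ ∫ y in s, |u x - u y| := by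
    simpa [Real.norm_eq_abs] using
      MeasureTheory.norm_integral_le_integral_norm (μ := volume.restrict s)
        (fun y => u x - u y)
  have h6 : ∫ y in s, |u x - u y| ≤ ∫ y in s, V := by
    apply MeasureTheory.setIntegral_mono_on ((hcint.sub h2).abs)
      ((integrableOn_const_iff (C := V)).mpr (Or.inr (by rw [hs, Real.volume_Ioo]; exact ENNReal.ofReal_lt_top)))
      hmeas
    intro y hy
    simp only [Pi.sub_apply]
    rw [abs_sub_comm]
    exact hosc x hx y hy
  have h7 : ∫ y in s, (V : ℝ) = (volume s).toReal * V := by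
    rw [MeasureTheory.setIntegral_const, smul_eq_mul, measureReal_def]
  calc ((volume s).toReal)⁻¹ * |∫ y in s, (u x - u y)|
      ≤ ((volume s).toReal)⁻¹ * ((volume s).toReal * V) := by
        apply mul_le_mul_of_nonneg_left ((h5.trans h6).trans_eq h7) (by positivity)
    _ = V := by field_simp

lemma full_weight (D R : ℝ) (hD : 0 < D) (hR : D < R) (k : ℕ) :
    IntegrableOn (fun x => (min x (2*D-x))⁻¹ *
        (∏ i ∈ Finset.Icc 1 k, Lrec i (min x (2*D-x)/R)) *
        (Lrec (k+1) (min x (2*D-x)/R))^2) (Set.Ioo 0 (2*D)) volume ∧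
    ∫ x in Set.Ioo 0 (2*D), (min x (2*D-x))⁻¹ *
        (∏ i ∈ Finset.Icc 1 k, Lrec i (min x (2*D-x)/R)) *
        (Lrec (k+1) (min x (2*D-x)/R))^2 ≤ 2 := by
  set W : ℝ → ℝ :=
    fun x => x⁻¹ * (∏ i ∈ Finset.Icc 1 k, Lrec i (x/R)) * (Lrec (k+1) (x/R))^2 with hWdef
  have hWd : (fun x => (min x (2*D-x))⁻¹ *
        (∏ i ∈ Finset.Icc 1 k, Lrec i (min x (2*D-x)/R)) *
        (Lrec (k+1) (min x (2*D-x)/R))^2) = fun x => W (min x (2*D-x)) := rfl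
  rw [hWd]
  obtain ⟨hint1, hle1⟩ := half_integral D R hD hR k
  have heq1 : Set.EqOn (fun x => W (min x (2*D-x))) W (Set.Ioc 0 D) := by
    intro x hx
    simp only [min_eq_left (by linarith [hx.2] : x ≤ 2*D - x)]
  have heq2 : Set.EqOn (fun x => W (min x (2*D-x))) (fun x => W (2*D - x))
      (Set.Ioo D (2*D)) := by
    intro x hx
    simp only [min_eq_right (by linarith [hx.1] : 2*D - x ≤ x)]
  have hic : IntervalIntegrable W volume 0 D := by
    rw [intervalIntegrable_iff_integrableOn_Ioc_of_le hD.le]; exact hint1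
  have hic2 : IntervalIntegrable (fun x => W (2*D - x)) volume D (2*D) := by
    have := (hic.comp_sub_left (2*D)).symm
    have h3 : (2*D - D : ℝ) = D := by ring
    rw [h3] at this
    simpa using this
  have hint2 : IntegrableOn (fun x => W (2*D - x)) (Set.Ioo D (2*D)) volume := by
    have := (intervalIntegrable_iff_integrableOn_Ioc_of_le (by linarith : D ≤ 2*D)).mp hic2
    exact this.mono_set Set.Ioo_subset_Ioc_self
  have hunion : Set.Ioo (0:ℝ) (2*D) = Set.Ioc 0 D ∪ Set.Ioo D (2*D) := by
    ext x
    simp only [Set.mem_Ioo, Set.mem_Ioc, Set.mem_union]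
    constructor
    · rintro ⟨h1, h2⟩
      rcases le_or_gt x D with h | h
      · exact Or.inl ⟨h1, h⟩
      · exact Or.inr ⟨h, h2⟩
    · rintro (⟨h1, h2⟩ | ⟨h1, h2⟩) <;> constructor <;> linarith
  have hdisj : Disjoint (Set.Ioc (0:ℝ) D) (Set.Ioo D (2*D)) := by
    apply Set.disjoint_left.mpr
    rintro x ⟨_, h2⟩ ⟨h3, _⟩
    exact absurd h3 (not_lt.mpr h2)
  have hIa : IntegrableOn (fun x => W (min x (2*D-x))) (Set.Ioc 0 D) volume :=
    hint1.congr_fun heq1.symm measurableSet_Ioc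
  have hIb : IntegrableOn (fun x => W (min x (2*D-x))) (Set.Ioo D (2*D)) volume :=
    hint2.congr_fun heq2.symm measurableSet_Ioo
  constructor
  · rw [hunion]
    exact hIa.union hIb
  · rw [hunion, MeasureTheory.setIntegral_union hdisj measurableSet_Ioo hIa hIb]
    have e1 : ∫ x in Set.Ioc (0:ℝ) D, W (min x (2*D-x)) = ∫ x in Set.Ioc (0:ℝ) D, W x :=
      MeasureTheory.setIntegral_congr_fun measurableSet_Ioc heq1
    have e2 : ∫ x in Set.Ioo D (2*D), W (min x (2*D-x))
        = ∫ x in Set.Ioo D (2*D), W (2*D - x) :=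
      MeasureTheory.setIntegral_congr_fun measurableSet_Ioo heq2
    have e3 : ∫ x in Set.Ioo D (2*D), W (2*D - x) ≤ 1 := by
      have : ∫ x in Set.Ioo D (2*D), W (2*D - x) = ∫ x in D..(2*D), W (2*D - x) := by
        rw [intervalIntegral.integral_of_le (by linarith : D ≤ 2*D),
          MeasureTheory.integral_Ioc_eq_integral_Ioo]
      rw [this, intervalIntegral.integral_comp_sub_left W (2*D)]
      have h2 : (2*D - 2*D : ℝ) = 0 := by ring
      have h3 : (2*D - D : ℝ) = D := by ring
      rw [h2, h3, intervalIntegral.integral_of_le hD.le]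
      exact hle1
    rw [e1, e2]
    linarith

theorem hardy_W11_interval_general :
    ∃ C > (0 : ℝ), ∀ D : ℝ, 0 < D → ∀ R : ℝ, D < R → ∀ m : ℕ, 2 ≤ m →
      ∀ u : ℝ → ℝ,
        ContDiffOn ℝ 1 u (Set.Ioo (0 : ℝ) (2 * D)) →
        IntegrableOn u (Set.Ioo (0 : ℝ) (2 * D)) volume →
        IntegrableOn (fun x => |derivWithin u (Set.Ioo (0 : ℝ) (2 * D)) x|)
          (Set.Ioo (0 : ℝ) (2 * D)) volume →
        (∫ x in Set.Ioo (0 : ℝ) (2 * D),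
            |u x - ⨍ y in Set.Ioo (0 : ℝ) (2 * D), u y| / min x (2 * D - x) *
              ((∏ i ∈ Finset.Icc 1 (m - 1), Lrec i (min x (2 * D - x) / R)) *
                Lrec m (min x (2 * D - x) / R) ^ 2)) ≤
          C * 2 ^ m *
            ∫ x in Set.Ioo (0 : ℝ) (2 * D), |derivWithin u (Set.Ioo (0 : ℝ) (2 * D)) x| := by
  refine ⟨1, one_pos, ?_⟩
  intro D hD R hR m hm u h1 h2 h3
  obtain ⟨k, rfl⟩ : ∃ k, m = k + 1 := ⟨m - 1, (Nat.succ_pred_eq_of_pos (by omega)).symm⟩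
  have hk1 : 1 ≤ k := by omega
  have hkm : k + 1 - 1 = k := rfl
  set s : Set ℝ := Set.Ioo (0 : ℝ) (2 * D) with hs
  set A : ℝ := ⨍ y in s, u y with hA
  set V : ℝ := ∫ y in s, |derivWithin u s y| with hV
  have hVnonneg : 0 ≤ V := MeasureTheory.integral_nonneg fun y => abs_nonneg _
  set Wδ : ℝ → ℝ := fun x => (min x (2*D-x))⁻¹ *
      (∏ i ∈ Finset.Icc 1 k, Lrec i (min x (2*D-x)/R)) *
      (Lrec (k+1) (min x (2*D-x)/R))^2 with hWδ
  obtain ⟨hWint, hWle⟩ := full_weight D R hD hR k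
  have hR0 : 0 < R := hD.trans hR
  have hδ : ∀ x ∈ s, 0 < min x (2*D-x) ∧ min x (2*D-x) < R := by
    intro x hx
    refine ⟨lt_min hx.1 (by linarith [hx.2]), ?_⟩
    have hmin : min x (2*D-x) ≤ D := by
      rcases le_total x D with h | h
      · exact min_le_iff.mpr (Or.inl h)
      · exact min_le_iff.mpr (Or.inr (by linarith))
    exact lt_of_le_of_lt hmin hR
  have hWnn : ∀ x ∈ s, 0 ≤ Wδ x := by
    intro x hx
    exact W_nonneg R hR0 k (hδ x hx).1 (hδ x hx).2
  set f : ℝ → ℝ := fun x => |u x - A| / min x (2*D-x) *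
      ((∏ i ∈ Finset.Icc 1 k, Lrec i (min x (2*D-x)/R)) *
        (Lrec (k+1) (min x (2*D-x)/R))^2) with hf
  have hfle : ∀ x ∈ s, f x ≤ V * Wδ x := by
    intro x hx
    have hx0 := (hδ x hx).1
    have hfx : f x = |u x - A| * Wδ x := by
      simp only [hf, hWδ]
      rw [div_eq_mul_inv]; ring
    rw [hfx]
    exact mul_le_mul_of_nonneg_right (osc_bound D hD u h1 h2 h3 hx) (hWnn x hx)
  have hfnn : ∀ x ∈ s, 0 ≤ f x := by
    intro x hx
    have hx0 := (hδ x hx).1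
    have hfx : f x = |u x - A| * Wδ x := by
      simp only [hf, hWδ]
      rw [div_eq_mul_inv]; ring
    rw [hfx]
    exact mul_nonneg (abs_nonneg _) (hWnn x hx)
  have hmeasS : MeasurableSet s := measurableSet_Ioo
  have hmono : ∫ x in s, f x ≤ ∫ x in s, V * Wδ x := by
    apply MeasureTheory.integral_mono_of_nonneg
    · filter_upwards [MeasureTheory.ae_restrict_mem hmeasS] with x hx
      exact hfnn x hx
    · exact hWint.const_mul V
    · filter_upwards [MeasureTheory.ae_restrict_mem hmeasS] with x hx
      exact hfle x hx
  have hWint2 : ∫ x in s, V * Wδ x = V * ∫ x in s, Wδ x := by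
    rw [MeasureTheory.integral_const_mul]
  have hfin : ∫ x in s, f x ≤ 2 * V := by
    calc ∫ x in s, f x ≤ ∫ x in s, V * Wδ x := hmono
      _ = V * ∫ x in s, Wδ x := hWint2
      _ ≤ V * 2 := mul_le_mul_of_nonneg_left hWle hVnonneg
      _ = 2 * V := by ring
  have h2pow : (2:ℝ) ≤ 2 ^ (k+1) := by
    calc (2:ℝ) = 2^1 := (pow_one 2).symm
      _ ≤ 2^(k+1) := pow_le_pow_right₀ one_le_two (by omega)
  calc (∫ x in s, f x) ≤ 2 * V := hfin
    _ ≤ 2^(k+1) * V := mul_le_mul_of_nonneg_right h2pow hVnonneg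
    _ = 1 * 2^(k+1) * V := by ring
end

section
/- Let 0 < θ ≤ 1 and let m ≥ 1 be an integer. Then for all t ∈ (0,1): ℒ_m(t)^θ ≤ (2/θ)²·e^{θ−2}·ℒ_{m+1}(t)². Moreover, for every θ > 0 there exists a constant C = C(θ) > 0 such that ℒ_m(t)^θ ≤ C·ℒ_{m+1}(t)² for all t ∈ (0,1) and all integers m ≥ 1. -/
open Real

lemma key_ineq (θ : ℝ) (hθ0 : 0 < θ) (u : ℝ) (hu : 0 < u) :
    u ^ 2 ≤ (2 / θ) ^ 2 * Real.exp (θ * u - 2) := by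
  have h1 : θ * u / 2 ≤ Real.exp (θ * u / 2 - 1) := by
    have := Real.add_one_le_exp (θ * u / 2 - 1)
    linarith
  have h2 : u ≤ (2 / θ) * Real.exp (θ * u / 2 - 1) := by
    rw [div_mul_eq_mul_div, le_div_iff₀ hθ0]
    nlinarith
  have hE : Real.exp (θ * u / 2 - 1) * Real.exp (θ * u / 2 - 1)
      = Real.exp (θ * u - 2) := by
    rw [← Real.exp_add]; ring_nf
  calc u ^ 2 ≤ ((2 / θ) * Real.exp (θ * u / 2 - 1)) ^ 2 :=
        pow_le_pow_left₀ hu.le h2 2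
    _ = (2 / θ) ^ 2 * Real.exp (θ * u - 2) := by
        rw [mul_pow, sq (Real.exp _), hE]

lemma core_ineq (θ : ℝ) (hθ0 : 0 < θ) (s : ℝ) (hs0 : 0 < s) (hs1 : s ≤ 1) :
    s ^ θ ≤ (2 / θ) ^ 2 * Real.exp (θ - 2) * (1 / (1 - Real.log s)) ^ 2 := by
  have hlog : Real.log s ≤ 0 := Real.log_nonpos hs0.le hs1
  set u := 1 - Real.log s with hudef
  have hu0 : 0 < u := by simp only [hudef]; linarith
  have hk := key_ineq θ hθ0 u hu0
  have hmain : Real.exp (θ * (1 - u)) * u ^ 2 ≤ (2 / θ) ^ 2 * Real.exp (θ - 2) := by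
    calc Real.exp (θ * (1 - u)) * u ^ 2
        ≤ Real.exp (θ * (1 - u)) * ((2 / θ) ^ 2 * Real.exp (θ * u - 2)) :=
          mul_le_mul_of_nonneg_left hk (Real.exp_pos _).le
      _ = (2 / θ) ^ 2 * (Real.exp (θ * (1 - u)) * Real.exp (θ * u - 2)) := by ring
      _ = (2 / θ) ^ 2 * Real.exp (θ - 2) := by rw [← Real.exp_add]; ring_nf
  rw [Real.rpow_def_of_pos hs0]
  have hls : Real.log s * θ = θ * (1 - u) := by rw [hudef]; ring
  rw [hls]
  calc Real.exp (θ * (1 - u)) = (Real.exp (θ * (1 - u)) * u ^ 2) * (1 / u) ^ 2 := by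
        field_simp
    _ ≤ ((2 / θ) ^ 2 * Real.exp (θ - 2)) * (1 / u) ^ 2 :=
        mul_le_mul_of_nonneg_right hmain (by positivity)

lemma Lrec_bounds (t : ℝ) (ht : t ∈ Set.Ioo (0 : ℝ) 1) (m : ℕ) :
    0 < Lrec m t ∧ Lrec m t ≤ 1 := by
  induction m with
  | zero => exact ⟨ht.1, ht.2.le⟩
  | succ n ih =>
    have hlog : Real.log (Lrec n t) ≤ 0 := Real.log_nonpos ih.1.le ih.2
    have h1 : (1:ℝ) ≤ 1 - Real.log (Lrec n t) := by linarith
    constructor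
    · show 0 < 1 / (1 - Real.log (Lrec n t))
      positivity
    · show 1 / (1 - Real.log (Lrec n t)) ≤ 1
      rw [div_le_one (by linarith)]; linarith

theorem Lrec_pow_le (θ : ℝ) (hθ0 : 0 < θ) (hθ1 : θ ≤ 1) (m : ℕ) (hm : 1 ≤ m) :
    (∀ t : ℝ, t ∈ Set.Ioo (0 : ℝ) 1 →
      Lrec m t ^ θ ≤ (2 / θ) ^ 2 * Real.exp (θ - 2) * Lrec (m + 1) t ^ 2) ∧
    ∀ θ' : ℝ, 0 < θ' → ∃ C > (0 : ℝ), ∀ t : ℝ, t ∈ Set.Ioo (0 : ℝ) 1 →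
      ∀ m' : ℕ, 1 ≤ m' → Lrec m' t ^ θ' ≤ C * Lrec (m' + 1) t ^ 2 := by
  constructor
  · intro t ht
    obtain ⟨h0, h1⟩ := Lrec_bounds t ht m
    have := core_ineq θ hθ0 (Lrec m t) h0 h1
    simpa [Lrec] using this
  · intro θ' hθ'
    set θ₀ := min θ' 1 with hθ₀def
    have hθ₀0 : 0 < θ₀ := lt_min hθ' one_pos
    have hθ₀1 : θ₀ ≤ 1 := min_le_right _ _
    refine ⟨(2 / θ₀) ^ 2 * Real.exp (θ₀ - 2), by positivity, ?_⟩
    intro t ht m' hm'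
    obtain ⟨h0, h1⟩ := Lrec_bounds t ht m'
    have hmono : Lrec m' t ^ θ' ≤ Lrec m' t ^ θ₀ :=
      Real.rpow_le_rpow_of_exponent_ge h0 h1 (min_le_left _ _)
    have := core_ineq θ₀ hθ₀0 (Lrec m' t) h0 h1
    calc Lrec m' t ^ θ' ≤ Lrec m' t ^ θ₀ := hmono
      _ ≤ (2 / θ₀) ^ 2 * Real.exp (θ₀ - 2) * Lrec (m' + 1) t ^ 2 := by
          simpa [Lrec] using this
end
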